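/- For positive integers m, n, l, the sum over non-negative integers s₁,...,s_l with s₁ + ... + s_l = n - 1 of the expression ((mn - s₂ - s₃ - ... - s_l - 1)/((mn-1)·n)) · C(n, s₁) · C(mn-1, s₂) · ... · C(mn-1, s_l) equals ((1 + (l-1)(m-1))/(n-1)) · C(n - 1 + (l-1)(mn-1), n-2), where C denotes the binomial coefficient. (Assume n ≥ 2 so the denominators are nonzero.) -/

import Mathlib

open Finset

lemma sum_antidiagonalTuple_cons {M : Type*} [AddCommMonoid M] (k n : ℕ)
    (f : (Fin (k + 1) → ℕ) → M) :
    ∑ s ∈ Finset.Nat.antidiagonalTuple (k + 1) n, f s =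
      ∑ p ∈ (Finset.HasAntidiagonal.antidiagonal n : Finset (ℕ × ℕ)), ∑ t ∈ Finset.Nat.antidiagonalTuple k p.2,
        f (Fin.cons p.1 t) := by
  rw [show (∑ p ∈ (Finset.HasAntidiagonal.antidiagonal n : Finset (ℕ × ℕ)),
      ∑ t ∈ Finset.Nat.antidiagonalTuple k p.2, f (Fin.cons p.1 t)) =
      ∑ x ∈ (Finset.HasAntidiagonal.antidiagonal n).sigma (fun p => Finset.Nat.antidiagonalTuple k p.2),
        f (Fin.cons x.1.1 x.2) from (Finset.sum_sigma (Finset.HasAntidiagonal.antidiagonal n) (fun p => Finset.Nat.antidiagonalTuple k p.2) (fun x => f (Fin.cons x.fst.1 x.snd))).symm]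
  refine Finset.sum_nbij' (fun s => ⟨(s 0, ∑ i : Fin k, s i.succ), Fin.tail s⟩)
    (fun x => Fin.cons x.1.1 x.2) ?_ ?_ ?_ ?_ ?_
  · intro s hs
    rw [Finset.Nat.mem_antidiagonalTuple, Fin.sum_univ_succ] at hs
    simp [Finset.mem_sigma, Finset.mem_antidiagonal,
      Finset.Nat.mem_antidiagonalTuple, Fin.tail, hs]
  · intro x hx
    rw [Finset.mem_sigma, Finset.HasAntidiagonal.mem_antidiagonal,
      Finset.Nat.mem_antidiagonalTuple] at hx
    rw [Finset.Nat.mem_antidiagonalTuple, Fin.sum_univ_succ]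
    simp [hx.2, hx.1]
  · intro s _
    simp [Fin.cons_self_tail]
  · intro x hx
    rw [Finset.mem_sigma, Finset.Nat.mem_antidiagonalTuple] at hx
    obtain ⟨p, t⟩ := x
    simp only [Fin.cons_zero, Fin.tail_cons, Sigma.mk.inj_iff, heq_eq_eq, and_true]
    simp only [Fin.cons_succ]
    simp only at hx
    rw [hx.2]
  · intro s _
    rw [Fin.cons_self_tail]

lemma erase_zero_eq (L : ℕ) :
    (Finset.univ : Finset (Fin (L + 1))).erase 0 =
      Finset.univ.map ⟨Fin.succ, Fin.succ_injective _⟩ := by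
  rw [Fin.univ_succ, Finset.erase_cons]

lemma vand_tuple (k : ℕ) : ∀ c N : ℕ,
    ∑ t ∈ Finset.Nat.antidiagonalTuple k c, ∏ i, N.choose (t i) = (k * N).choose c := by
  induction k with
  | zero =>
    intro c N
    cases c with
    | zero => simp
    | succ c => simp [Finset.Nat.antidiagonalTuple_zero_succ]
  | succ k ih =>
    intro c N
    rw [sum_antidiagonalTuple_cons]
    have : ∀ p : ℕ × ℕ, ∑ t ∈ Finset.Nat.antidiagonalTuple k p.2,
        ∏ i : Fin (k + 1), N.choose ((Fin.cons p.1 t : Fin (k + 1) → ℕ) i) =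
        N.choose p.1 * (k * N).choose p.2 := by
      intro p
      simp_rw [Fin.prod_univ_succ, Fin.cons_zero, Fin.cons_succ]
      rw [← Finset.mul_sum, ih]
    simp_rw [this]
    rw [← Nat.add_choose_eq]
    congr 1
    ring

lemma key2 (a b c : ℕ) :
    ∑ p ∈ Finset.HasAntidiagonal.antidiagonal (c + 1), p.1 * (a + 1).choose p.1 * b.choose p.2 =
      (a + 1) * (a + b).choose c := by
  rw [Finset.Nat.antidiagonal_succ, Finset.sum_cons, Finset.sum_map]
  simp only [Nat.choose_zero_right, Nat.zero_mul, Nat.mul_one, zero_add]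
  rw [Nat.add_choose_eq, Finset.mul_sum]
  apply Finset.sum_congr rfl
  intro p hp
  simp only [Function.Embedding.coe_prodMap, Function.Embedding.coeFn_mk,
    Function.Embedding.refl_apply, Prod.map_fst, Prod.map_snd]
  have h := Nat.add_one_mul_choose_eq a p.1
  calc (p.1 + 1) * (a + 1).choose (p.1 + 1) * b.choose p.2
      = ((a + 1).choose (p.1 + 1) * (p.1 + 1)) * b.choose p.2 := by ring
    _ = ((a + 1) * a.choose p.1) * b.choose p.2 := by rw [← h]
    _ = (a + 1) * (a.choose p.1 * b.choose p.2) := by ring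

/-- For positive integers `m, n, l` with `n ≥ 2`, the sum over tuples
`(s₁, …, s_l)` of non-negative integers with `s₁ + ⋯ + s_l = n - 1` of
`((mn - s₂ - ⋯ - s_l - 1)/((mn-1)·n)) · C(n, s₁) · C(mn-1, s₂) ⋯ C(mn-1, s_l)`
equals `((1 + (l-1)(m-1))/(n-1)) · C(n - 1 + (l-1)(mn-1), n-2)`. -/
theorem stmt3 (m n l : ℕ) (hm : 0 < m) (hn : 2 ≤ n) (hl : 0 < l) :
    ∑ s ∈ Finset.Nat.antidiagonalTuple l (n - 1),
      ((((m * n : ℚ)) - (∑ i ∈ Finset.univ.erase (⟨0, hl⟩ : Fin l), (s i : ℚ)) - 1) /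
          (((m * n : ℚ) - 1) * (n : ℚ))) *
        (Nat.choose n (s ⟨0, hl⟩) : ℚ) *
        ∏ i ∈ Finset.univ.erase (⟨0, hl⟩ : Fin l), (Nat.choose (m * n - 1) (s i) : ℚ) =
      ((1 + ((l : ℚ) - 1) * ((m : ℚ) - 1)) / ((n : ℚ) - 1)) *
        (Nat.choose (n - 1 + (l - 1) * (m * n - 1)) (n - 2) : ℚ) := by
  obtain ⟨L, rfl⟩ : ∃ L, l = L + 1 := ⟨l - 1, (Nat.succ_pred_eq_of_pos hl).symm⟩
  have h2 : 2 ≤ m * n := le_trans hn (Nat.le_mul_of_pos_left n hm)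
  have h1 : 1 ≤ m * n := le_trans (by norm_num) h2
  set N := m * n - 1 with hN
  have hNq : ((N : ℕ) : ℚ) = (m : ℚ) * n - 1 := by
    rw [hN]; push_cast [h1]; ring
  have hn0 : (n : ℚ) ≠ 0 := by
    have : (2 : ℚ) ≤ (n : ℚ) := by exact_mod_cast hn
    linarith
  have hn1 : (n : ℚ) - 1 ≠ 0 := by
    have : (2 : ℚ) ≤ (n : ℚ) := by exact_mod_cast hn
    intro h; linarith
  have hmn1 : (m : ℚ) * n - 1 ≠ 0 := by
    have : (2 : ℚ) ≤ (m : ℚ) * n := by exact_mod_cast h2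
    intro h; linarith
  simp only [show (⟨0, hl⟩ : Fin (L + 1)) = 0 from rfl]
  rw [sum_antidiagonalTuple_cons]
  -- inner sums
  have step : ∀ p ∈ Finset.HasAntidiagonal.antidiagonal (n - 1),
      (∑ t ∈ Finset.Nat.antidiagonalTuple L p.2,
        ((((m * n : ℚ)) - (∑ i ∈ Finset.univ.erase (0 : Fin (L + 1)),
            (((Fin.cons p.1 t : Fin (L + 1) → ℕ) i : ℕ) : ℚ)) - 1) /
          (((m * n : ℚ) - 1) * (n : ℚ))) *
        (Nat.choose n ((Fin.cons p.1 t : Fin (L + 1) → ℕ) 0) : ℚ) *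
        ∏ i ∈ Finset.univ.erase (0 : Fin (L + 1)),
          (Nat.choose N ((Fin.cons p.1 t : Fin (L + 1) → ℕ) i) : ℚ)) =
      ((((m : ℚ) * n) - (p.2 : ℚ) - 1) / (((m : ℚ) * n - 1) * (n : ℚ))) *
        (Nat.choose n p.1 : ℚ) * ((Nat.choose (L * N) p.2 : ℕ) : ℚ) := by
    intro p hp
    simp only [erase_zero_eq, Finset.sum_map, Finset.prod_map,
      Function.Embedding.coeFn_mk, Fin.cons_succ, Fin.cons_zero]
    have hconst : ∀ t ∈ Finset.Nat.antidiagonalTuple L p.2,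
        ((((m : ℚ) * n) - (∑ i : Fin L, ((t i : ℕ) : ℚ)) - 1) /
            (((m : ℚ) * n - 1) * (n : ℚ))) * (Nat.choose n p.1 : ℚ) *
          ∏ i : Fin L, (Nat.choose N (t i) : ℚ) =
        (((((m : ℚ) * n) - (p.2 : ℚ) - 1) / (((m : ℚ) * n - 1) * (n : ℚ))) *
          (Nat.choose n p.1 : ℚ)) * ∏ i : Fin L, (Nat.choose N (t i) : ℚ) := by
      intro t ht
      rw [Finset.Nat.mem_antidiagonalTuple] at ht
      have : (∑ i : Fin L, ((t i : ℕ) : ℚ)) = (p.2 : ℚ) := by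
        rw [← ht]; push_cast; ring
      rw [this]
    rw [Finset.sum_congr rfl hconst, ← Finset.mul_sum]
    have : (∑ t ∈ Finset.Nat.antidiagonalTuple L p.2,
        ∏ i : Fin L, (Nat.choose N (t i) : ℚ)) = ((Nat.choose (L * N) p.2 : ℕ) : ℚ) := by
      exact_mod_cast congrArg (Nat.cast : ℕ → ℚ) (vand_tuple L p.2 N)
    rw [this]
  rw [Finset.sum_congr rfl step]
  have hn1' : 1 ≤ n := by omega
  have hcast : ((n - 1 : ℕ) : ℚ) = (n : ℚ) - 1 := by push_cast [hn1']; ring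
  have step2 : ∀ p ∈ Finset.HasAntidiagonal.antidiagonal (n - 1),
      ((((m : ℚ) * n) - (p.2 : ℚ) - 1) / (((m : ℚ) * n - 1) * (n : ℚ))) *
          (Nat.choose n p.1 : ℚ) * ((Nat.choose (L * N) p.2 : ℕ) : ℚ) =
      ((((m : ℚ) - 1) * n) / (((m : ℚ) * n - 1) * (n : ℚ))) *
          ((Nat.choose n p.1 : ℚ) * (Nat.choose (L * N) p.2 : ℚ)) +
        (1 / (((m : ℚ) * n - 1) * (n : ℚ))) *
          ((p.1 : ℚ) * (Nat.choose n p.1 : ℚ) * (Nat.choose (L * N) p.2 : ℚ)) := by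
    intro p hp
    rw [Finset.HasAntidiagonal.mem_antidiagonal] at hp
    have hp2 : (p.2 : ℚ) = (n : ℚ) - 1 - (p.1 : ℚ) := by
      have := congrArg (Nat.cast : ℕ → ℚ) hp
      push_cast at this
      rw [hcast] at this
      linarith
    rw [hp2]
    ring
  rw [Finset.sum_congr rfl step2, Finset.sum_add_distrib, ← Finset.mul_sum, ← Finset.mul_sum]
  have hS1 : (∑ p ∈ Finset.HasAntidiagonal.antidiagonal (n - 1),
      (Nat.choose n p.1 : ℚ) * (Nat.choose (L * N) p.2 : ℚ)) =
      ((Nat.choose (n + L * N) (n - 1) : ℕ) : ℚ) := by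
    exact_mod_cast congrArg (Nat.cast : ℕ → ℚ) (Nat.add_choose_eq n (L * N) (n - 1)).symm
  have hS2nat : (∑ p ∈ Finset.HasAntidiagonal.antidiagonal (n - 1),
      p.1 * Nat.choose n p.1 * Nat.choose (L * N) p.2) =
      n * Nat.choose (n - 1 + L * N) (n - 2) := by
    have e1 : n - 1 = (n - 2) + 1 := by omega
    have e2 : (n - 2) + 1 = n - 1 := by omega
    have e3 : (n - 1) + 1 = n := by omega
    have := key2 (n - 1) (L * N) (n - 2)
    rw [e2, e3] at this
    exact this
  have hS2 : (∑ p ∈ Finset.HasAntidiagonal.antidiagonal (n - 1),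
      (p.1 : ℚ) * (Nat.choose n p.1 : ℚ) * (Nat.choose (L * N) p.2 : ℚ)) =
      (n : ℚ) * ((Nat.choose (n - 1 + L * N) (n - 2) : ℕ) : ℚ) := by
    exact_mod_cast congrArg (Nat.cast : ℕ → ℚ) hS2nat
  rw [hS1, hS2]
  have hXY : ((n : ℚ) + ((L * N : ℕ) : ℚ)) * ((Nat.choose (n - 1 + L * N) (n - 2) : ℕ) : ℚ) =
      ((Nat.choose (n + L * N) (n - 1) : ℕ) : ℚ) * ((n : ℚ) - 1) := by
    have h := Nat.add_one_mul_choose_eq (n - 1 + L * N) (n - 2)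
    have e4 : (n - 1 + L * N) + 1 = n + L * N := by omega
    have e5 : (n - 2) + 1 = n - 1 := by omega
    rw [e4, e5] at h
    have := congrArg (Nat.cast : ℕ → ℚ) h
    push_cast at this
    rw [hcast] at this
    push_cast
    linarith
  have hLN : ((L * N : ℕ) : ℚ) = (L : ℚ) * ((m : ℚ) * n - 1) := by
    push_cast [hNq]
    ring
  have hRHSidx : (L + 1 - 1) = L := by omega
  rw [hRHSidx]
  have hcastL : ((L + 1 : ℕ) : ℚ) - 1 = (L : ℚ) := by push_cast; ring
  push_cast [hcastL] at *
  set X : ℚ := ((Nat.choose (n - 1 + L * N) (n - 2) : ℕ) : ℚ) with hX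
  set Y : ℚ := ((Nat.choose (n + L * N) (n - 1) : ℕ) : ℚ) with hY
  rw [hLN] at hXY
  have hY2 : Y = (((n : ℚ) + (L : ℚ) * ((m : ℚ) * n - 1)) * X) / ((n : ℚ) - 1) := by
    field_simp
    linarith [hXY]
  rw [hY2]
  field_simp
  ring
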